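/- For positive integers M₁,…,Mₙ all of whose 3-adic (ternary) digits lie in {0,1}, the set C(1,M₁,…,Mₙ) = {α ∈ Σ₃ : Mᵢ·α ∈ Σ₃ for all i} contains the element Σ_{j=0}^∞ 3^{j(m+1)}, where m = max_i ⌊log₃ Mᵢ⌋; in particular C(1,M₁,…,Mₙ) is infinite. -/

import Mathlib

open scoped BigOperators

instance : Fact (Nat.Prime 3) := ⟨by norm_num⟩

/-- The 3-adic Cantor set: 3-adic integers all of whose digits are 0 or 1. -/
def Sigma3 : Set ℤ_[3] :=
  {x | ∃ a : ℕ → ℕ, (∀ n, a n ≤ 1) ∧ x = ∑' n : ℕ, (a n : ℤ_[3]) * 3 ^ n}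

lemma norm_three : ‖(3:ℤ_[3])‖ = 3⁻¹ := by
  have := PadicInt.norm_p (p := 3)
  simpa using this

lemma summable_digits (a : ℕ → ℕ) :
    Summable (fun k => (a k : ℤ_[3]) * 3 ^ k) := by
  apply NonarchimedeanAddGroup.summable_of_tendsto_cofinite_zero
  rw [Nat.cofinite_eq_atTop]
  apply squeeze_zero_norm (a := fun k => (3⁻¹ : ℝ)^k)
  · intro k
    rw [norm_mul, norm_pow, norm_three]
    calc ‖(a k : ℤ_[3])‖ * (3⁻¹:ℝ)^k ≤ 1 * (3⁻¹:ℝ)^k := by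
          gcongr
          exact PadicInt.norm_le_one _
    _ = (3⁻¹:ℝ)^k := one_mul _
  · exact tendsto_pow_atTop_nhds_zero_of_lt_one (by norm_num) (by norm_num)

lemma ofDigits_eq_sum (b : ℕ) (L : List ℕ) (p : ℕ) (hL : L.length ≤ p) :
    Nat.ofDigits b L = ∑ d ∈ Finset.range p, L.getD d 0 * b ^ d := by
  induction L generalizing p with
  | nil => simp
  | cons x L ih =>
    have hp : 1 ≤ p := le_trans (by simp) hL
    obtain ⟨q, rfl⟩ : ∃ q, p = q + 1 := ⟨p - 1, by omega⟩
    rw [Nat.ofDigits_cons, ih q (by simpa using hL), Finset.sum_range_succ']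
    simp only [List.getD_cons_succ, List.getD_cons_zero, pow_succ, pow_zero, mul_one,
      Finset.mul_sum]
    rw [add_comm]
    congr 1
    exact Finset.sum_congr rfl fun d _ => by ring

lemma geom_inv (q : ℕ) (hq : 0 < q) :
    (1 - (3:ℤ_[3])^q) * (∑' j : ℕ, (3:ℤ_[3]) ^ (j * q)) = 1 := by
  have hx : ‖(3:ℤ_[3])^q‖ < 1 := by
    rw [norm_pow, norm_three]
    calc ((3:ℝ)⁻¹)^q ≤ ((3:ℝ)⁻¹)^1 :=
          pow_le_pow_of_le_one (by norm_num) (by norm_num) hq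
    _ < 1 := by norm_num
  set x := (3:ℤ_[3])^q with hxdef
  have hrw : (fun j : ℕ => (3:ℤ_[3]) ^ (j * q)) = fun j => x ^ j := by
    funext j; rw [hxdef, ← pow_mul, mul_comm]
  rw [hrw]
  have hs : Summable (fun j : ℕ => x ^ j) := summable_geometric_of_norm_lt_one hx
  have key : ∑' j : ℕ, x ^ j = 1 + x * ∑' j : ℕ, x ^ j := by
    conv_lhs => rw [Summable.tsum_eq_zero_add hs]
    rw [pow_zero, ← hs.tsum_mul_left x]
    congr 1
    exact tsum_congr fun j => by ring
  linear_combination key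

set_option maxHeartbeats 1000000 in
lemma mul_tsum_mem_sigma3 (M p : ℕ) (hM : 0 < M) (hp : Nat.log 3 M < p)
    (hdig : ∀ d ∈ Nat.digits 3 M, d ≤ 1) :
    (M : ℤ_[3]) * ∑' j : ℕ, (3:ℤ_[3]) ^ (j * p) ∈ Sigma3 := by
  have hp0 : 0 < p := Nat.pos_of_ne_zero (by omega)
  haveI : NeZero p := ⟨hp0.ne'⟩
  set L := Nat.digits 3 M with hL
  have hlen : L.length ≤ p := by
    rw [hL, Nat.digits_len 3 M (by norm_num) hM.ne']
    omega
  set a : ℕ → ℕ := fun k => L.getD (k % p) 0 with ha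
  have hgetD : ∀ d, L.getD d 0 ≤ 1 := by
    intro d
    rcases lt_or_ge d L.length with h | h
    · rw [List.getD_eq_getElem L 0 h]
      exact hdig _ (List.getElem_mem h)
    · rw [List.getD_eq_default L 0 h]
      omega
  have ha1 : ∀ k, a k ≤ 1 := fun k => hgetD _
  set f : ℕ → ℤ_[3] := fun k => (a k : ℤ_[3]) * 3 ^ k with hf
  have hsum : Summable f := summable_digits a
  set e : ℕ × Fin p ≃ ℕ := (Nat.divModEquiv p).symm with he
  have hse : Summable (fun x : ℕ × Fin p => f (e x)) := e.summable_iff.mpr hsum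
  have hMsum : (M : ℤ_[3]) = ∑ d ∈ Finset.range p, (L.getD d 0 : ℤ_[3]) * 3 ^ d := by
    have hn : M = ∑ d ∈ Finset.range p, L.getD d 0 * 3 ^ d := by
      conv_lhs => rw [← Nat.ofDigits_digits 3 M]
      exact ofDigits_eq_sum 3 L p hlen
    rw [hn]
    push_cast
    ring
  have h3 : ∀ j : ℕ, ∑' r : Fin p, f (e (j, r)) = (M:ℤ_[3]) * 3 ^ (j * p) := by
    intro j
    rw [tsum_fintype]
    have hterm : ∀ r : Fin p, f (e (j, r)) = ((L.getD (r:ℕ) 0 : ℤ_[3]) * 3 ^ (r:ℕ)) * 3 ^ (j * p) := by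
      intro r
      have hev : e (j, r) = j * p + (r : ℕ) := rfl
      have hmod : (j * p + (r : ℕ)) % p = (r : ℕ) := by
        rw [add_comm, Nat.add_mul_mod_self_right, Nat.mod_eq_of_lt r.isLt]
      rw [hf, hev]
      simp only [ha, hmod]
      rw [pow_add]
      ring
    rw [Finset.sum_congr rfl (fun r _ => hterm r), ← Finset.sum_mul]
    congr 1
    rw [hMsum, ← Fin.sum_univ_eq_sum_range (fun d => (L.getD d 0 : ℤ_[3]) * 3 ^ d) p]
  have hgeo : Summable (fun j : ℕ => (3:ℤ_[3]) ^ (j * p)) := by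
    have : (fun j : ℕ => (3:ℤ_[3]) ^ (j * p)) = fun j => ((3:ℤ_[3])^p) ^ j := by
      funext j; rw [← pow_mul, mul_comm]
    rw [this]
    apply summable_geometric_of_norm_lt_one
    rw [norm_pow, norm_three]
    calc ((3:ℝ)⁻¹)^p ≤ ((3:ℝ)⁻¹)^1 := pow_le_pow_of_le_one (by norm_num) (by norm_num) hp0
    _ < 1 := by norm_num
  have hcalc : (M : ℤ_[3]) * ∑' j : ℕ, (3:ℤ_[3]) ^ (j * p) = ∑' k, f k := by
    calc (M : ℤ_[3]) * ∑' j : ℕ, (3:ℤ_[3]) ^ (j * p)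
        = ∑' j : ℕ, (M : ℤ_[3]) * 3 ^ (j * p) := (hgeo.tsum_mul_left _).symm
      _ = ∑' j : ℕ, ∑' r : Fin p, f (e (j, r)) := tsum_congr fun j => (h3 j).symm
      _ = ∑' x : ℕ × Fin p, f (e x) := (Summable.tsum_prod hse).symm
      _ = ∑' k, f k := e.tsum_eq f
  exact ⟨a, ha1, hcalc⟩


lemma digits_one : Nat.digits 3 1 = [1] := by simp

lemma tsum_mem_set (n : ℕ) (M : Fin n → ℕ) (hpos : ∀ i, 0 < M i)
    (hdig : ∀ i, ∀ d ∈ Nat.digits 3 (M i), d ≤ 1)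
    (q : ℕ) (hq : ∀ i, Nat.log 3 (M i) < q) (hq0 : 0 < q) :
    (∑' j : ℕ, (3 : ℤ_[3]) ^ (j * q)) ∈
      {α ∈ Sigma3 | ∀ i, (M i : ℤ_[3]) * α ∈ Sigma3} := by
  constructor
  · have := mul_tsum_mem_sigma3 1 q (by norm_num) (by simpa using hq0) (by rw [digits_one]; simp)
    simpa using this
  · intro i
    exact mul_tsum_mem_sigma3 (M i) q (hpos i) (hq i) (hdig i)

lemma tsum_inj : Function.Injective (fun q : ℕ => ∑' j : ℕ, (3 : ℤ_[3]) ^ (j * (q + 1))) := by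
  intro s t hst
  simp only at hst
  have h1 := geom_inv (s + 1) (Nat.succ_pos s)
  have h2 := geom_inv (t + 1) (Nat.succ_pos t)
  rw [hst] at h1
  set T := ∑' j : ℕ, (3 : ℤ_[3]) ^ (j * (t + 1)) with hT
  have hT0 : T ≠ 0 := by
    intro h0
    rw [h0, mul_zero] at h2
    exact one_ne_zero h2.symm
  have heq : (1 - (3:ℤ_[3])^(s+1)) = (1 - (3:ℤ_[3])^(t+1)) :=
    mul_right_cancel₀ hT0 (h1.trans h2.symm)
  have hpow : (3:ℤ_[3])^(s+1) = (3:ℤ_[3])^(t+1) := by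
    linear_combination -heq
  have hnat : (3:ℕ)^(s+1) = 3^(t+1) := by
    have : ((3^(s+1) : ℕ) : ℤ_[3]) = ((3^(t+1) : ℕ) : ℤ_[3]) := by push_cast; exact hpow
    exact_mod_cast this
  have := Nat.pow_right_injective (by norm_num : 2 ≤ 3) hnat
  omega

theorem C1_family_infinite (n : ℕ) (M : Fin n → ℕ) (hpos : ∀ i, 0 < M i)
    (hdig : ∀ i, ∀ d ∈ Nat.digits 3 (M i), d ≤ 1) :
    (∑' j : ℕ, (3 : ℤ_[3]) ^ (j * (Finset.univ.sup (fun i => Nat.log 3 (M i)) + 1))) ∈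
      {α ∈ Sigma3 | ∀ i, (M i : ℤ_[3]) * α ∈ Sigma3} ∧
    {α ∈ Sigma3 | ∀ i, (M i : ℤ_[3]) * α ∈ Sigma3}.Infinite := by
  set m := Finset.univ.sup (fun i => Nat.log 3 (M i)) with hm
  have hlog : ∀ i, Nat.log 3 (M i) ≤ m := fun i =>
    Finset.le_sup (f := fun i => Nat.log 3 (M i)) (Finset.mem_univ i)
  constructor
  · exact tsum_mem_set n M hpos hdig (m + 1) (fun i => Nat.lt_succ_of_le (hlog i)) (Nat.succ_pos m)
  · apply Set.infinite_of_injective_forall_mem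
      (f := fun t : ℕ => ∑' j : ℕ, (3 : ℤ_[3]) ^ (j * (m + t + 1)))
    · intro s t hst
      have := tsum_inj (a₁ := m + s) (a₂ := m + t) hst
      omega
    · intro t
      exact tsum_mem_set n M hpos hdig (m + t + 1)
        (fun i => by have := hlog i; omega) (by omega)
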